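/- Let 0 < α < 1. For every r > 0, the integral ∫_{−r/2}^{r/2} (r^α − (r + y)^α) |y|^{−1−α} dy converges, is independent of r, and equals the strictly positive constant c_α := ∫_{−1/2}^{1/2} (1 − (1 + z)^α) |z|^{−1−α} dz ∈ (0, ∞). In particular there is a constant c > 0 depending only on α such that ∫_{−r/2}^{r/2} (r^α − (r + y)^α) |y|^{−1−α} dy ≥ c for all r > 0. -/

import Mathlib

open MeasureTheory Filter

section aux

variable {α : ℝ}

/-- Lipschitz bound from the mean value theorem. -/
lemma stmt12_lip (hα0 : 0 < α) (hα1 : α < 1) :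
    ∀ x ∈ Set.Icc (-(1:ℝ)/2) (1/2), |(1 + x) ^ α - 1| ≤ (2 * α) * |x| := by
  intro x hx
  have hder : ∀ y ∈ Set.Icc (-(1:ℝ)/2) (1/2),
      HasDerivWithinAt (fun t : ℝ => (1 + t) ^ α) (α * (1 + y) ^ (α - 1)) (Set.Icc (-(1:ℝ)/2) (1/2)) y := by
    intro y hy
    have h1 : (1:ℝ) + y ≠ 0 := by
      have := hy.1; simp only [Set.mem_Icc] at hy; nlinarith [hy.1]
    have := (Real.hasDerivAt_rpow_const (x := 1 + y) (p := α) (Or.inl h1)).comp y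
      ((hasDerivAt_id y).const_add 1)
    simpa [mul_comm, Function.comp_def] using this.hasDerivWithinAt
  have hbound : ∀ y ∈ Set.Icc (-(1:ℝ)/2) (1/2), ‖α * (1 + y) ^ (α - 1)‖ ≤ 2 * α := by
    intro y hy
    simp only [Set.mem_Icc] at hy
    have h12 : (0:ℝ) < 1/2 := by norm_num
    have hy1 : (1:ℝ)/2 ≤ 1 + y := by linarith [hy.1]
    have hpos : (0:ℝ) < 1 + y := by linarith
    have h1 : (1 + y) ^ (α - 1) ≤ ((1:ℝ)/2) ^ (α - 1) :=
      Real.rpow_le_rpow_of_nonpos h12 hy1 (by linarith)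
    have h2 : ((1:ℝ)/2) ^ (α - 1) = (2:ℝ) ^ (1 - α) := by
      rw [show (1:ℝ)/2 = 2⁻¹ by norm_num, Real.inv_rpow (by norm_num),
        ← Real.rpow_neg (by norm_num), neg_sub]
    have h3 : (2:ℝ) ^ (1 - α) ≤ 2 := by
      calc (2:ℝ) ^ (1 - α) ≤ (2:ℝ) ^ (1:ℝ) :=
            Real.rpow_le_rpow_of_exponent_le (by norm_num) (by linarith)
        _ = 2 := Real.rpow_one 2
    have h4 : (0:ℝ) ≤ (1 + y) ^ (α - 1) := Real.rpow_nonneg hpos.le _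
    rw [Real.norm_eq_abs, abs_mul, abs_of_pos hα0, abs_of_nonneg h4]
    calc α * (1 + y) ^ (α - 1) ≤ α * 2 := by nlinarith
      _ = 2 * α := by ring
  have h0 : (0:ℝ) ∈ Set.Icc (-(1:ℝ)/2) (1/2) := by norm_num
  have := (convex_Icc (-(1:ℝ)/2) (1/2)).norm_image_sub_le_of_norm_hasDerivWithin_le
    hder hbound h0 hx
  simpa [Real.norm_eq_abs] using this

/-- Integrability of the dominating function `|x| ^ (-α)`. -/
lemma stmt12_abs_rpow_int (hα1 : α < 1) :
    IntervalIntegrable (fun x : ℝ => |x| ^ (-α)) volume (-(1:ℝ)/2) (1/2) := by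
  have h1 : IntervalIntegrable (fun x : ℝ => x ^ (-α)) volume 0 (1/2) :=
    intervalIntegral.intervalIntegrable_rpow' (by linarith)
  have h2 : IntervalIntegrable (fun x : ℝ => |x| ^ (-α)) volume 0 (1/2) := by
    rw [intervalIntegrable_iff] at h1 ⊢
    refine h1.congr_fun (fun x hx => ?_) measurableSet_uIoc
    rw [Set.uIoc_of_le (by norm_num : (0:ℝ) ≤ 1/2)] at hx
    rw [abs_of_pos hx.1]
  have h3 : IntervalIntegrable (fun x : ℝ => |x| ^ (-α)) volume (-(1:ℝ)/2) 0 := by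
    have := (IntervalIntegrable.iff_comp_neg (f := fun x : ℝ => |x| ^ (-α)) (a := 0) (b := 1/2) enorm_ne_top).mp h2
    simp only [abs_neg, neg_zero] at this
    rw [show (-(1:ℝ)/2) = -(1/2) by norm_num]
    exact this.symm
  exact h3.trans h2

/-- Integrability of the base integrand. -/
lemma stmt12_base_int (hα0 : 0 < α) (hα1 : α < 1) :
    IntervalIntegrable (fun z : ℝ => (1 - (1 + z) ^ α) * |z| ^ (-1 - α)) volume
      (-(1:ℝ)/2) (1/2) := by
  have hdom : IntervalIntegrable (fun x : ℝ => (2 * α) * |x| ^ (-α)) volume (-(1:ℝ)/2) (1/2) :=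
    (stmt12_abs_rpow_int hα1).const_mul _
  refine hdom.mono_fun ?_ ?_
  · apply Measurable.aestronglyMeasurable
    fun_prop
  · refine (ae_restrict_mem measurableSet_uIoc).mono fun x hx => ?_
    have hxI : x ∈ Set.Icc (-(1:ℝ)/2) (1/2) := by
      rw [Set.uIoc_of_le (by norm_num : (-(1:ℝ)/2) ≤ 1/2)] at hx
      exact ⟨hx.1.le, hx.2⟩
    rcases eq_or_ne x 0 with rfl | hx0
    · simp only [add_zero, Real.one_rpow, sub_self, abs_zero,
          Real.zero_rpow (show (-1:ℝ) - α ≠ 0 by intro h; nlinarith),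
          Real.zero_rpow (neg_ne_zero.mpr hα0.ne'), zero_mul, mul_zero,
          norm_zero, le_refl]
    · have hlip := stmt12_lip hα0 hα1 x hxI
      have habs : (0:ℝ) < |x| := abs_pos.mpr hx0
      have hkey : |x| * |x| ^ (-1 - α) = |x| ^ (-α) := by
        nth_rewrite 1 [← Real.rpow_one (|x|)]
        rw [← Real.rpow_add habs]
        congr 1; ring
      have h1 : (0:ℝ) ≤ |x| ^ (-1 - α) := Real.rpow_nonneg habs.le _
      have h2 : (0:ℝ) ≤ |x| ^ (-α) := Real.rpow_nonneg habs.le _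
      simp only [Real.norm_eq_abs]
      rw [abs_mul, abs_of_nonneg h1, abs_mul, abs_of_nonneg h2,
        abs_of_pos (by positivity : (0:ℝ) < 2 * α)]
      calc |1 - (1 + x) ^ α| * |x| ^ (-1 - α)
          ≤ ((2 * α) * |x|) * |x| ^ (-1 - α) := by
            apply mul_le_mul_of_nonneg_right _ h1
            rw [abs_sub_comm]; exact hlip
        _ = (2 * α) * (|x| * |x| ^ (-1 - α)) := by ring
        _ = (2 * α) * |x| ^ (-α) := by rw [hkey]

end aux

/-- For `0 < α < 1` and every `r > 0`, the integral
`∫_{-r/2}^{r/2} (r^α - (r+y)^α) |y|^{-1-α} dy` converges, is independent of `r`, and equals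
the strictly positive constant `c_α = ∫_{-1/2}^{1/2} (1 - (1+z)^α) |z|^{-1-α} dz`.
In particular there is `c > 0` with the integral `≥ c` for all `r > 0`. -/
theorem stmt_12 (α : ℝ) (hα0 : 0 < α) (hα1 : α < 1) :
    IntervalIntegrable (fun z => (1 - (1 + z) ^ α) * |z| ^ (-1 - α)) volume
      (-(1:ℝ)/2) (1/2) ∧
    0 < (∫ z in (-(1:ℝ)/2)..(1/2), (1 - (1 + z) ^ α) * |z| ^ (-1 - α)) ∧
    (∀ r : ℝ, 0 < r →
      IntervalIntegrable (fun y => (r ^ α - (r + y) ^ α) * |y| ^ (-1 - α)) volume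
        (-r/2) (r/2) ∧
      (∫ y in (-r/2)..(r/2), (r ^ α - (r + y) ^ α) * |y| ^ (-1 - α))
        = ∫ z in (-(1:ℝ)/2)..(1/2), (1 - (1 + z) ^ α) * |z| ^ (-1 - α)) ∧
    (∃ c : ℝ, 0 < c ∧ ∀ r : ℝ, 0 < r →
      c ≤ ∫ y in (-r/2)..(r/2), (r ^ α - (r + y) ^ α) * |y| ^ (-1 - α)) := by
  have hInt := stmt12_base_int hα0 hα1
  set g : ℝ → ℝ := fun z => (1 - (1 + z) ^ α) * |z| ^ (-1 - α) with hg
  -- subinterval integrability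
  have hsub1 : Set.uIcc (-(1:ℝ)/2) 0 ⊆ Set.uIcc (-(1:ℝ)/2) (1/2) := by
    rw [Set.uIcc_of_le (by norm_num : (-(1:ℝ)/2) ≤ 0),
      Set.uIcc_of_le (by norm_num : (-(1:ℝ)/2) ≤ 1/2)]
    exact Set.Icc_subset_Icc le_rfl (by norm_num)
  have hsub2 : Set.uIcc (0:ℝ) (1/2) ⊆ Set.uIcc (-(1:ℝ)/2) (1/2) := by
    rw [Set.uIcc_of_le (by norm_num : (0:ℝ) ≤ 1/2),
      Set.uIcc_of_le (by norm_num : (-(1:ℝ)/2) ≤ 1/2)]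
    exact Set.Icc_subset_Icc (by norm_num) le_rfl
  have hI1 : IntervalIntegrable g volume (-(1:ℝ)/2) 0 := hInt.mono_set hsub1
  have hI2 : IntervalIntegrable g volume 0 (1/2) := hInt.mono_set hsub2
  have hneg : IntervalIntegrable (fun x => g (-x)) volume 0 (1/2) := by
    have h := ((IntervalIntegrable.iff_comp_neg (f := g) (a := -(1:ℝ)/2) (b := 0) enorm_ne_top).mp hI1).symm
    rw [neg_zero, show (-(-(1:ℝ)/2)) = 1/2 by norm_num] at h
    exact h
  -- positivity
  have hflip : (∫ x in (0:ℝ)..(1/2), g (-x)) = ∫ z in (-(1:ℝ)/2)..0, g z := by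
    rw [intervalIntegral.integral_comp_neg]
    norm_num
  have hsplit : (∫ z in (-(1:ℝ)/2)..(1/2), g z)
      = ∫ x in (0:ℝ)..(1/2), (g (-x) + g x) := by
    rw [← intervalIntegral.integral_add_adjacent_intervals hI1 hI2, ← hflip,
      ← intervalIntegral.integral_add hneg hI2]
  have hpos : 0 < ∫ z in (-(1:ℝ)/2)..(1/2), g z := by
    rw [hsplit]
    apply intervalIntegral.intervalIntegral_pos_of_pos_on (hneg.add hI2) ?_ (by norm_num)
    intro x hx
    obtain ⟨hx0, hx2⟩ := hx
    have hxpos : (0:ℝ) < |x| := abs_pos.mpr (ne_of_gt hx0)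
    have habs : (0:ℝ) < |x| ^ (-1 - α) := Real.rpow_pos_of_pos hxpos _
    have heq : g (-x) + g x = (2 - (1 - x) ^ α - (1 + x) ^ α) * |x| ^ (-1 - α) := by
      simp only [hg]
      rw [show (1:ℝ) + -x = 1 - x by ring, abs_neg]
      ring
    rw [heq]
    have hconc : (1 - x) ^ α + (1 + x) ^ α < 2 := by
      have sc := Real.strictConcaveOn_rpow hα0 hα1
      have h := sc.2 (Set.mem_Ici.mpr (by linarith : (0:ℝ) ≤ 1 - x))
        (Set.mem_Ici.mpr (by linarith : (0:ℝ) ≤ 1 + x))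
        (by intro h; nlinarith [hx0])
        (by norm_num : (0:ℝ) < 1/2) (by norm_num : (0:ℝ) < 1/2) (by norm_num)
      simp only [smul_eq_mul] at h
      rw [show (1/2:ℝ) * (1 - x) + (1/2) * (1 + x) = 1 by ring, Real.one_rpow] at h
      linarith
    exact mul_pos (by linarith) habs
  have hscale : ∀ r : ℝ, 0 < r →
      IntervalIntegrable (fun y => (r ^ α - (r + y) ^ α) * |y| ^ (-1 - α)) volume
        (-r/2) (r/2) ∧
      (∫ y in (-r/2)..(r/2), (r ^ α - (r + y) ^ α) * |y| ^ (-1 - α))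
        = ∫ z in (-(1:ℝ)/2)..(1/2), g z := by
    intro r hr
    set F : ℝ → ℝ := fun y => (r ^ α - (r + y) ^ α) * |y| ^ (-1 - α) with hF
    have hEq : ∀ z ∈ Set.uIcc (-(1:ℝ)/2) (1/2), F (r * z) = r⁻¹ * g z := by
      intro z hz
      rw [Set.uIcc_of_le (by norm_num : (-(1:ℝ)/2) ≤ 1/2), Set.mem_Icc] at hz
      have hz1 : (0:ℝ) ≤ 1 + z := by linarith [hz.1]
      simp only [hF, hg]
      rw [show r + r * z = r * (1 + z) by ring, Real.mul_rpow hr.le hz1, abs_mul,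
        abs_of_pos hr, Real.mul_rpow hr.le (abs_nonneg z),
        show r ^ α - r ^ α * (1 + z) ^ α = r ^ α * (1 - (1 + z) ^ α) by ring,
        show r ^ α * (1 - (1 + z) ^ α) * (r ^ (-1 - α) * |z| ^ (-1 - α))
          = (r ^ α * r ^ (-1 - α)) * ((1 - (1 + z) ^ α) * |z| ^ (-1 - α)) by ring,
        ← Real.rpow_add hr, show α + (-1 - α) = (-1 : ℝ) by ring, Real.rpow_neg_one]
    have hcomp : IntervalIntegrable (fun z => F (r * z)) volume (-(1:ℝ)/2) (1/2) := by
      rw [intervalIntegrable_iff] at hInt ⊢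
      have h' : IntegrableOn (fun z => r⁻¹ * g z) (Set.uIoc (-(1:ℝ)/2) (1/2)) volume :=
        hInt.const_mul r⁻¹
      exact h'.congr_fun (fun z hz => (hEq z (Set.uIoc_subset_uIcc hz)).symm)
        measurableSet_uIoc
    have hFi : IntervalIntegrable F volume (-r/2) (r/2) := by
      refine (IntervalIntegrable.comp_mul_left_iff hr.ne').mp ?_
      rw [show (-r/2)/r = -(1:ℝ)/2 by field_simp,
        show (r/2)/r = (1:ℝ)/2 by field_simp]
      exact hcomp
    have hCV := intervalIntegral.integral_comp_mul_left (a := -(1:ℝ)/2) (b := 1/2)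
      (c := r) F hr.ne'
    rw [show r * (-(1:ℝ)/2) = -r/2 by ring, show r * ((1:ℝ)/2) = r/2 by ring,
      smul_eq_mul] at hCV
    have hIntEq : (∫ z in (-(1:ℝ)/2)..(1/2), F (r * z))
        = r⁻¹ * ∫ z in (-(1:ℝ)/2)..(1/2), g z := by
      rw [intervalIntegral.integral_congr hEq, intervalIntegral.integral_const_mul]
    refine ⟨hFi, ?_⟩
    have := hIntEq.symm.trans hCV
    exact (mul_left_cancel₀ (inv_ne_zero hr.ne') this.symm)
  exact ⟨hInt, hpos, hscale, ⟨∫ z in (-(1:ℝ)/2)..(1/2), g z, hpos,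
    fun r hr => le_of_eq (hscale r hr).2.symm⟩⟩
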